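/- arXiv:2012.13288 — 5 statements merged into one kernel-verified Lean document; each statement's English description precedes it below -/
import Mathlib

section
/- Fix $t\in(0,1)$ and let $W_1,W_2,\dots$ be independent identically distributed random variables, each geometric with success parameter $t$ (so $P[W_j=k]=t(1-t)^k$ for integers $k\ge 0$). For $n\ge 1$ set $S_n = W_1+\dots+W_n$ and $\pi_n(t) = E\!\left[\frac{n}{n+S_n}\right]$. Then the sequence $n\mapsto \pi_n(t)$ is nonincreasing: $\pi_{n+1}(t)\le \pi_n(t)$ for all $n\ge 1$. -/
open MeasureTheory ProbabilityTheory

/-- Convolution formula for the pmf of `W a + ∑_{i∈s} W i` when `a ∉ s`. -/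
lemma aux_conv {Ω : Type*} [MeasurableSpace Ω] (P : Measure Ω)
    (W : ℕ → Ω → ℕ) (hmeas : ∀ j, Measurable (W j))
    (hindep : iIndepFun W P)
    {s : Finset ℕ} {a : ℕ} (ha : a ∉ s) (m : ℕ) :
    P {ω | W a ω + ∑ i ∈ s, W i ω = m}
      = ∑ k ∈ Finset.range (m + 1),
          P {ω | W a ω = k} * P {ω | ∑ i ∈ s, W i ω = m - k} := by
  have hT : Measurable (fun ω => ∑ i ∈ s, W i ω) :=
    Finset.measurable_sum _ fun i _ => hmeas i
  have hset : {ω | W a ω + ∑ i ∈ s, W i ω = m}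
      = ⋃ k ∈ Finset.range (m + 1),
          ((W a ⁻¹' {k}) ∩ ((fun ω => ∑ i ∈ s, W i ω) ⁻¹' {m - k})) := by
    ext ω
    simp only [Set.mem_setOf_eq, Set.mem_iUnion, Finset.mem_range, Set.mem_inter_iff,
      Set.mem_preimage, Set.mem_singleton_iff]
    constructor
    · intro h
      exact ⟨W a ω, by omega, rfl, by omega⟩
    · rintro ⟨k, hk, h1, h2⟩
      omega
  rw [hset, measure_biUnion_finset]
  · refine Finset.sum_congr rfl fun k _ => ?_
    have hi : IndepFun (W a) (∑ j ∈ s, W j) P :=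
      (hindep.indepFun_finsetSum_of_notMem hmeas ha).symm
    have hmul := hi.measure_inter_preimage_eq_mul {k} {m - k}
      (measurableSet_singleton _) (measurableSet_singleton _)
    have hfun : (∑ j ∈ s, W j) = (fun ω => ∑ i ∈ s, W i ω) := by
      funext ω; simp [Finset.sum_apply]
    rw [hfun] at hmul
    have e1 : W a ⁻¹' {k} = {ω | W a ω = k} := by ext ω; simp
    have e2 : (fun ω => ∑ i ∈ s, W i ω) ⁻¹' {m - k}
        = {ω | ∑ i ∈ s, W i ω = m - k} := by ext ω; simp
    rw [hmul, e1, e2]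
  · intro k _ l _ hkl
    refine Set.disjoint_left.2 fun ω hω hω' => ?_
    exact hkl (hω.1.symm.trans hω'.1)
  · intro k _
    exact ((hmeas a) (measurableSet_singleton _)).inter (hT (measurableSet_singleton _))

/-- The pmf of `∑_{i∈s} W i` depends only on `s.card`, for IID `W`. -/
lemma aux_card {Ω : Type*} [MeasurableSpace Ω] (P : Measure Ω)
    (W : ℕ → Ω → ℕ) (hmeas : ∀ j, Measurable (W j))
    (hindep : iIndepFun W P)
    (hid : ∀ i j k, P {ω | W i ω = k} = P {ω | W j ω = k})
    (s : Finset ℕ) :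
    ∀ m, P {ω | ∑ i ∈ s, W i ω = m}
      = P {ω | ∑ i ∈ Finset.range s.card, W i ω = m} := by
  induction s using Finset.induction_on with
  | empty => simp
  | @insert a s ha ih =>
    intro m
    have h1 : {ω | ∑ i ∈ insert a s, W i ω = m}
        = {ω | W a ω + ∑ i ∈ s, W i ω = m} := by
      ext ω; simp [Finset.sum_insert ha]
    have hcard : (insert a s).card = s.card + 1 := Finset.card_insert_of_notMem ha
    have h2 : {ω | ∑ i ∈ Finset.range (insert a s).card, W i ω = m}
        = {ω | W s.card ω + ∑ i ∈ Finset.range s.card, W i ω = m} := by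
      rw [hcard]
      ext ω
      simp only [Set.mem_setOf_eq, Finset.sum_range_succ]
      omega
    rw [h1, h2, aux_conv P W hmeas hindep ha m,
      aux_conv P W hmeas hindep (Finset.notMem_range_self) m]
    refine Finset.sum_congr rfl fun k _ => ?_
    rw [hid a s.card k, ih (m - k)]

/-- Integrability of `c/(c + X)` for `X : Ω → ℕ` and `c > 0`. -/
lemma aux_int {Ω : Type*} [MeasurableSpace Ω] (P : Measure Ω) [IsProbabilityMeasure P]
    (c : ℝ) (hc : 0 < c) (X : Ω → ℕ) (hX : Measurable X) :
    Integrable (fun ω => c / (c + (X ω : ℝ))) P := by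
  have hm : Measurable (fun ω => c / (c + (X ω : ℝ))) := by
    apply Measurable.div measurable_const
    exact measurable_const.add (measurable_from_nat.comp hX)
  refine (integrable_const (1 : ℝ)).mono' hm.aestronglyMeasurable (ae_of_all _ fun ω => ?_)
  have h0 : (0 : ℝ) ≤ (X ω : ℝ) := Nat.cast_nonneg _
  rw [Real.norm_eq_abs, abs_of_nonneg (by positivity)]
  rw [div_le_one (by positivity)]
  linarith

/-- Pointwise AM–HM inequality. -/
lemma aux_pointwise (n : ℕ) (hn : 1 ≤ n) (w : ℕ → ℝ) (hw : ∀ i, 0 ≤ w i) :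
    ((n : ℝ) + 1) / (((n : ℝ) + 1) + ∑ i ∈ Finset.range (n + 1), w i)
      ≤ (∑ j ∈ Finset.range (n + 1),
          (n : ℝ) / ((n : ℝ) + ∑ i ∈ (Finset.range (n + 1)).erase j, w i)) / ((n : ℝ) + 1) := by
  set u := Finset.range (n + 1) with hu
  have hcardu : u.card = n + 1 := by rw [hu]; exact Finset.card_range _
  set S := ∑ i ∈ u, w i with hS
  have hS0 : 0 ≤ S := Finset.sum_nonneg fun i _ => hw i
  have hn1 : (1 : ℝ) ≤ (n : ℝ) := by exact_mod_cast hn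
  set a : ℕ → ℝ := fun j => (n : ℝ) + ∑ i ∈ u.erase j, w i with haa
  have hapos : ∀ j, 0 < a j := fun j => by
    have : 0 ≤ ∑ i ∈ u.erase j, w i := Finset.sum_nonneg fun i _ => hw i
    simp only [haa]; linarith
  have hsum_a : ∑ j ∈ u, a j = (n : ℝ) * (((n : ℝ) + 1) + S) := by
    have h1 : ∀ j ∈ u, a j = (n : ℝ) + (S - w j) := by
      intro j hj
      simp only [haa, hS]
      rw [Finset.sum_erase_eq_sub hj]
    rw [Finset.sum_congr rfl h1, Finset.sum_add_distrib, Finset.sum_sub_distrib,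
      Finset.sum_const, Finset.sum_const, ← hS, hcardu]
    simp only [nsmul_eq_mul]
    push_cast
    ring
  -- Cauchy-Schwarz : (n+1)^2 ≤ (∑ a j) * (∑ (a j)⁻¹)
  have hCS : (((n : ℝ) + 1)) ^ 2 ≤ (∑ j ∈ u, a j) * (∑ j ∈ u, (a j)⁻¹) := by
    have hcs := Finset.sum_mul_sq_le_sq_mul_sq u (fun j => Real.sqrt (a j))
      (fun j => (Real.sqrt (a j))⁻¹)
    have h1 : ∀ j ∈ u, Real.sqrt (a j) * (Real.sqrt (a j))⁻¹ = 1 := fun j _ =>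
      mul_inv_cancel₀ (ne_of_gt (Real.sqrt_pos.2 (hapos j)))
    have h2 : ∀ j ∈ u, Real.sqrt (a j) ^ 2 = a j := fun j _ =>
      Real.sq_sqrt (hapos j).le
    have h3 : ∀ j ∈ u, ((Real.sqrt (a j))⁻¹) ^ 2 = (a j)⁻¹ := fun j _ => by
      rw [inv_pow, Real.sq_sqrt (hapos j).le]
    rw [Finset.sum_congr rfl h1, Finset.sum_congr rfl h2, Finset.sum_congr rfl h3,
      Finset.sum_const, hcardu, nsmul_eq_mul, mul_one] at hcs
    calc ((n : ℝ) + 1) ^ 2 = (((n + 1 : ℕ) : ℝ)) ^ 2 := by push_cast; ring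
      _ ≤ _ := hcs
  rw [hsum_a] at hCS
  set A := ∑ j ∈ u, (a j)⁻¹ with hA
  have hA0 : 0 ≤ A := Finset.sum_nonneg fun j _ => (inv_nonneg.2 (hapos j).le)
  have hD : (0 : ℝ) < ((n : ℝ) + 1) + S := by linarith
  have hgoal : (∑ j ∈ u, (n : ℝ) / a j) = (n : ℝ) * A := by
    rw [hA, Finset.mul_sum]
    exact Finset.sum_congr rfl fun j _ => div_eq_mul_inv _ _
  rw [hgoal, div_le_div_iff₀ hD (by linarith : (0:ℝ) < (n : ℝ) + 1)]
  nlinarith [hCS, hD, hA0]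

/-- If `W₁, W₂, …` are IID geometric(`t`) random variables (`P[W_j = k] = t(1-t)^k`) and
`S_n = W₁ + ⋯ + W_n`, then `π_n(t) = E[n/(n+S_n)]` is nonincreasing in `n ≥ 1`. -/
theorem stmt_3 {Ω : Type*} [MeasurableSpace Ω] (P : Measure Ω) [IsProbabilityMeasure P]
    (t : ℝ) (ht : t ∈ Set.Ioo (0 : ℝ) 1)
    (W : ℕ → Ω → ℕ) (hmeas : ∀ j, Measurable (W j))
    (hindep : iIndepFun W P)
    (hgeom : ∀ j k, P {ω | W j ω = k} = ENNReal.ofReal (t * (1 - t) ^ k)) :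
    ∀ n : ℕ, 1 ≤ n →
      (∫ ω, ((n : ℝ) + 1) / (((n : ℝ) + 1) + ∑ j ∈ Finset.range (n + 1), (W j ω : ℝ)) ∂P)
        ≤ ∫ ω, (n : ℝ) / ((n : ℝ) + ∑ j ∈ Finset.range n, (W j ω : ℝ)) ∂P := by
  intro n hn
  have hid : ∀ i j k, P {ω | W i ω = k} = P {ω | W j ω = k} := fun i j k => by
    rw [hgeom i k, hgeom j k]
  set u := Finset.range (n + 1) with hu
  have hnpos : (0 : ℝ) < n := by exact_mod_cast hn
  set T : ℕ → Ω → ℕ := fun j ω => ∑ i ∈ u.erase j, W i ω with hT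
  set Sn : Ω → ℕ := fun ω => ∑ i ∈ Finset.range n, W i ω with hSn
  have hTmeas : ∀ j, Measurable (T j) := fun j =>
    Finset.measurable_sum _ fun i _ => hmeas i
  have hSnmeas : Measurable Sn := Finset.measurable_sum _ fun i _ => hmeas i
  -- each leave-one-out integral equals the range-n integral
  have key : ∀ j ∈ u,
      (∫ ω, (n : ℝ) / ((n : ℝ) + (T j ω : ℝ)) ∂P)
        = ∫ ω, (n : ℝ) / ((n : ℝ) + (Sn ω : ℝ)) ∂P := by
    intro j hj
    have hmap : Measure.map (T j) P = Measure.map Sn P := by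
      refine Measure.ext_of_singleton fun m => ?_
      rw [Measure.map_apply (hTmeas j) (measurableSet_singleton m),
        Measure.map_apply hSnmeas (measurableSet_singleton m)]
      have h1 : (T j) ⁻¹' {m} = {ω | ∑ i ∈ u.erase j, W i ω = m} := by
        ext ω; simp [hT]
      have h2 : Sn ⁻¹' {m} = {ω | ∑ i ∈ Finset.range n, W i ω = m} := by
        ext ω; simp [hSn]
      have hcard : (u.erase j).card = n := by
        rw [Finset.card_erase_of_mem hj, hu, Finset.card_range]
        omega
      rw [h1, h2, aux_card P W hmeas hindep hid (u.erase j) m, hcard]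
    have hf : Measurable (fun m : ℕ => (n : ℝ) / ((n : ℝ) + (m : ℝ))) :=
      measurable_from_nat
    calc (∫ ω, (n : ℝ) / ((n : ℝ) + (T j ω : ℝ)) ∂P)
        = ∫ m, (n : ℝ) / ((n : ℝ) + (m : ℝ)) ∂(Measure.map (T j) P) :=
          (integral_map (hTmeas j).aemeasurable hf.aestronglyMeasurable).symm
      _ = ∫ m, (n : ℝ) / ((n : ℝ) + (m : ℝ)) ∂(Measure.map Sn P) := by rw [hmap]
      _ = ∫ ω, (n : ℝ) / ((n : ℝ) + (Sn ω : ℝ)) ∂P :=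
          integral_map hSnmeas.aemeasurable hf.aestronglyMeasurable
  -- pointwise inequality
  have hcast : ∀ j ω, ((T j ω : ℕ) : ℝ) = ∑ i ∈ u.erase j, (W i ω : ℝ) := fun j ω => by
    simp only [hT]; exact Nat.cast_sum _ _
  have hcastS : ∀ ω, ((Sn ω : ℕ) : ℝ) = ∑ i ∈ Finset.range n, (W i ω : ℝ) := fun ω => by
    simp only [hSn]; exact Nat.cast_sum _ _
  have hpw : ∀ ω,
      ((n : ℝ) + 1) / (((n : ℝ) + 1) + ∑ i ∈ u, (W i ω : ℝ))
        ≤ (∑ j ∈ u, (n : ℝ) / ((n : ℝ) + (T j ω : ℝ))) / ((n : ℝ) + 1) := by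
    intro ω
    simp only [hcast]
    exact aux_pointwise n hn (fun i => (W i ω : ℝ)) (fun i => Nat.cast_nonneg _)
  -- integrability facts
  have hIL : Integrable
      (fun ω => ((n : ℝ) + 1) / (((n : ℝ) + 1) + ∑ i ∈ u, (W i ω : ℝ))) P := by
    have h := aux_int P ((n : ℝ) + 1) (by linarith) (fun ω => ∑ i ∈ u, W i ω)
      (Finset.measurable_sum _ fun i _ => hmeas i)
    have heq : (fun ω => ((n : ℝ) + 1) / (((n : ℝ) + 1) + ∑ i ∈ u, (W i ω : ℝ)))
        = (fun ω => ((n : ℝ) + 1) / (((n : ℝ) + 1) + ((∑ i ∈ u, W i ω : ℕ) : ℝ))) := by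
      funext ω; rw [Nat.cast_sum]
    rw [heq]; exact h
  have hIT : ∀ j, Integrable (fun ω => (n : ℝ) / ((n : ℝ) + (T j ω : ℝ))) P := fun j =>
    aux_int P n hnpos (T j) (hTmeas j)
  have hISn : Integrable (fun ω => (n : ℝ) / ((n : ℝ) + (Sn ω : ℝ))) P :=
    aux_int P n hnpos Sn hSnmeas
  -- combine
  have step1 : (∫ ω, ((n : ℝ) + 1) / (((n : ℝ) + 1) + ∑ i ∈ u, (W i ω : ℝ)) ∂P)
      ≤ ∫ ω, (∑ j ∈ u, (n : ℝ) / ((n : ℝ) + (T j ω : ℝ))) / ((n : ℝ) + 1) ∂P := by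
    refine integral_mono hIL ?_ hpw
    exact (integrable_finset_sum u fun j _ => hIT j).div_const _
  have step2 : (∫ ω, (∑ j ∈ u, (n : ℝ) / ((n : ℝ) + (T j ω : ℝ))) / ((n : ℝ) + 1) ∂P)
      = ∫ ω, (n : ℝ) / ((n : ℝ) + (Sn ω : ℝ)) ∂P := by
    rw [integral_div, integral_finset_sum u fun j _ => hIT j]
    rw [Finset.sum_congr rfl key, Finset.sum_const, hu, Finset.card_range]
    rw [nsmul_eq_mul]
    push_cast
    field_simp
  have final : (∫ ω, (n : ℝ) / ((n : ℝ) + (Sn ω : ℝ)) ∂P)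
      = ∫ ω, (n : ℝ) / ((n : ℝ) + ∑ i ∈ Finset.range n, (W i ω : ℝ)) ∂P := by
    refine integral_congr_ae (ae_of_all _ fun ω => ?_)
    simp only [hcastS]
  calc _ ≤ _ := step1
    _ = _ := step2
    _ = _ := final
end

section
/- Let $n\ge 1$ be an integer. The function $t\mapsto \pi_n(t) := n\int_0^1 z^{n-1}\left(\frac{t}{1-z(1-t)}\right)^{n} dz$ is strictly increasing on $(0,1)$, with $\lim_{t\uparrow 1}\pi_n(t)=1$. -/
open Set Filter intervalIntegral MeasureTheory

private lemma denom_pos5 {t z : ℝ} (ht0 : 0 < t) (ht1 : t ≤ 1) (hz0 : 0 ≤ z) (hz1 : z ≤ 1) :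
    0 < 1 - z * (1 - t) := by nlinarith

private lemma contOn5 (n : ℕ) {t : ℝ} (ht0 : 0 < t) (ht1 : t ≤ 1) :
    ContinuousOn (fun z : ℝ => z ^ (n - 1) * (t / (1 - z * (1 - t))) ^ n) (Icc 0 1) := by
  apply ContinuousOn.mul
  · exact (continuousOn_id.pow _)
  · apply ContinuousOn.pow
    apply ContinuousOn.div continuousOn_const
    · fun_prop
    · intro z hz
      exact (denom_pos5 ht0 ht1 hz.1 hz.2).ne'

private lemma integrable5 (n : ℕ) {t : ℝ} (ht0 : 0 < t) (ht1 : t ≤ 1) :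
    IntervalIntegrable (fun z : ℝ => z ^ (n - 1) * (t / (1 - z * (1 - t))) ^ n)
      MeasureTheory.volume 0 1 := by
  apply ContinuousOn.intervalIntegrable
  have : uIcc (0:ℝ) 1 = Icc 0 1 := uIcc_of_le zero_le_one
  rw [this]
  exact contOn5 n ht0 ht1

private lemma bound5 (n : ℕ) {t z : ℝ} (ht0 : 0 < t) (ht1 : t ≤ 1) (hz0 : 0 ≤ z) (hz1 : z ≤ 1) :
    0 ≤ z ^ (n - 1) * (t / (1 - z * (1 - t))) ^ n ∧
      z ^ (n - 1) * (t / (1 - z * (1 - t))) ^ n ≤ 1 := by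
  have hd : 0 < 1 - z * (1 - t) := denom_pos5 ht0 ht1 hz0 hz1
  have hq0 : 0 ≤ t / (1 - z * (1 - t)) := div_nonneg ht0.le hd.le
  have hq1 : t / (1 - z * (1 - t)) ≤ 1 := by
    rw [div_le_one hd]; nlinarith
  constructor
  · positivity
  · calc z ^ (n - 1) * (t / (1 - z * (1 - t))) ^ n
        ≤ 1 * 1 := by
          apply mul_le_mul (pow_le_one₀ hz0 hz1) (pow_le_one₀ hq0 hq1) (by positivity)
          norm_num
    _ = 1 := by norm_num

/-- For every integer `n ≥ 1`, the function
`t ↦ π_n(t) = n ∫_0^1 z^{n-1} (t/(1-z(1-t)))^n dz` is strictly increasing on `(0,1)`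
and tends to `1` as `t ↑ 1`. -/
theorem stmt_5 (n : ℕ) (hn : 1 ≤ n) :
    StrictMonoOn
      (fun t : ℝ => (n : ℝ) * ∫ z in (0 : ℝ)..1, z ^ (n - 1) * (t / (1 - z * (1 - t))) ^ n)
      (Set.Ioo 0 1) ∧
    Filter.Tendsto
      (fun t : ℝ => (n : ℝ) * ∫ z in (0 : ℝ)..1, z ^ (n - 1) * (t / (1 - z * (1 - t))) ^ n)
      (nhdsWithin 1 (Set.Iio 1)) (nhds 1) := by
  have hn0 : (n : ℝ) ≠ 0 := Nat.cast_ne_zero.mpr (by omega)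
  constructor
  · -- strict monotonicity
    intro t1 ht1 t2 ht2 h12
    have key : (∫ z in (0:ℝ)..1, z ^ (n - 1) * (t1 / (1 - z * (1 - t1))) ^ n)
        < ∫ z in (0:ℝ)..1, z ^ (n - 1) * (t2 / (1 - z * (1 - t2))) ^ n := by
      have hi1 := integrable5 n ht1.1 ht1.2.le
      have hi2 := integrable5 n ht2.1 ht2.2.le
      have hpos : 0 < ∫ z in (0:ℝ)..1,
          (z ^ (n - 1) * (t2 / (1 - z * (1 - t2))) ^ n
            - z ^ (n - 1) * (t1 / (1 - z * (1 - t1))) ^ n) := by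
        apply intervalIntegral_pos_of_pos_on (hi2.sub hi1) _ zero_lt_one
        intro z hz
        have hd1 : 0 < 1 - z * (1 - t1) := denom_pos5 ht1.1 ht1.2.le hz.1.le hz.2.le
        have hd2 : 0 < 1 - z * (1 - t2) := denom_pos5 ht2.1 ht2.2.le hz.1.le hz.2.le
        have hquot : t1 / (1 - z * (1 - t1)) < t2 / (1 - z * (1 - t2)) := by
          rw [div_lt_div_iff₀ hd1 hd2]
          nlinarith [hz.2, ht1.1, h12]
        have hq0 : 0 ≤ t1 / (1 - z * (1 - t1)) := div_nonneg ht1.1.le hd1.le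
        have hpow : (t1 / (1 - z * (1 - t1))) ^ n < (t2 / (1 - z * (1 - t2))) ^ n :=
          pow_lt_pow_left₀ hquot hq0 (by omega)
        have hzp : 0 < z ^ (n - 1) := pow_pos hz.1 _
        nlinarith
      rw [intervalIntegral.integral_sub hi2 hi1] at hpos
      linarith
    have := mul_lt_mul_of_pos_left key (show (0:ℝ) < n by positivity)
    simpa using this
  · -- limit
    have hlim : Filter.Tendsto
        (fun t : ℝ => ∫ z in (0:ℝ)..1, z ^ (n - 1) * (t / (1 - z * (1 - t))) ^ n)
        (nhdsWithin 1 (Set.Iio 1)) (nhds (∫ z in (0:ℝ)..1, z ^ (n - 1))) := by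
      apply intervalIntegral.tendsto_integral_filter_of_dominated_convergence
        (fun _ => (1 : ℝ))
      · -- measurability eventually
        filter_upwards [Ioo_mem_nhdsLT_of_mem (show (1:ℝ) ∈ Ioc 0 1 by norm_num)] with t ht
        apply ContinuousOn.aestronglyMeasurable _ measurableSet_uIoc
        have : Set.uIoc (0:ℝ) 1 ⊆ Icc 0 1 := by
          rw [uIoc_of_le zero_le_one]; exact Ioc_subset_Icc_self
        exact (contOn5 n ht.1 ht.2.le).mono this
      · filter_upwards [Ioo_mem_nhdsLT_of_mem (show (1:ℝ) ∈ Ioc 0 1 by norm_num)] with t ht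
        filter_upwards with z hz
        rw [uIoc_of_le zero_le_one] at hz
        have := bound5 n ht.1 ht.2.le hz.1.le hz.2
        rw [Real.norm_eq_abs, abs_of_nonneg this.1]
        exact this.2
      · exact intervalIntegrable_const
      · filter_upwards with z hz
        rw [uIoc_of_le zero_le_one] at hz
        have hc : ContinuousAt (fun t : ℝ => z ^ (n - 1) * (t / (1 - z * (1 - t))) ^ n) 1 := by
          apply ContinuousAt.mul continuousAt_const
          apply ContinuousAt.pow
          apply ContinuousAt.div continuousAt_id (by fun_prop)
          norm_num
        have h1 : (fun t : ℝ => z ^ (n - 1) * (t / (1 - z * (1 - t))) ^ n) 1 = z ^ (n - 1) := by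
          norm_num
        have h2 := hc.tendsto.mono_left (nhdsWithin_le_nhds (s := Iio 1))
        simp only [h1] at h2
        convert h2 using 2
    have hval : (∫ z in (0:ℝ)..1, z ^ (n - 1)) = 1 / n := by
      rw [integral_pow]
      have h0 : (0:ℝ) ^ n = 0 := zero_pow (by omega)
      have : n - 1 + 1 = n := by omega
      rw [this, h0, Nat.cast_sub hn]
      push_cast
      simp
    have : Filter.Tendsto
        (fun t : ℝ => (n : ℝ) * ∫ z in (0:ℝ)..1, z ^ (n - 1) * (t / (1 - z * (1 - t))) ^ n)
        (nhdsWithin 1 (Set.Iio 1)) (nhds ((n : ℝ) * (1 / n))) := by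
      apply Filter.Tendsto.const_mul
      rwa [hval] at hlim
    simpa [hn0] using this
end

section
/- Let $p=e^{-1}$ and $q=1-e^{-1}$. Then $\tilde\pi_1(-1)-V_1(-1) = \frac{p}{2q}\Bigl[-2\log(1-q)-\bigl(\log(1-q)\bigr)^{2}\Bigr] = \frac{p}{2q} = \frac{1}{2(e-1)} > 0$; equivalently $\tilde\pi_1(-1) = 2\,V_1(-1)$. Consequently the quantity $-\frac{p}{q}\log(1-q)$ strictly exceeds $\frac{p}{2q}(\log(1-q))^{2}$ at $q=1-e^{-1}$. -/
open Finset

lemma icc_sum_eq (g : ℕ → ℝ) (n : ℕ) :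
    ∑ j ∈ Icc 1 (n+1), g j = ∑ k ∈ range (n+1), g (k+1) := by
  induction n with
  | zero => simp
  | succ m ih =>
    rw [Finset.sum_range_succ, ← ih, Finset.sum_Icc_succ_top (by omega)]

-- partial fraction identity
lemma harm_id (n : ℕ) :
    ∑ k ∈ range (n + 1), (1:ℝ) / ((k+1) * (((n-k : ℕ) : ℝ)+1)) =
      2 / (n+2) * ∑ j ∈ Icc 1 (n+1), (1:ℝ) / j := by
  have h1 : ∑ j ∈ Icc 1 (n+1), (1:ℝ) / j = ∑ k ∈ range (n+1), (1:ℝ) / (k+1) := by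
    rw [icc_sum_eq (fun j => (1:ℝ)/j) n]; push_cast; rfl
  have h2 : ∑ k ∈ range (n+1), (1:ℝ) / (((n-k:ℕ):ℝ)+1) = ∑ k ∈ range (n+1), (1:ℝ) / (k+1) := by
    rw [← Finset.sum_range_reflect]
    apply Finset.sum_congr rfl
    intro k hk
    rw [Finset.mem_range] at hk
    congr 3
    omega
  have key : ∀ k ∈ range (n+1), (1:ℝ) / ((k+1) * (((n-k:ℕ):ℝ)+1)) =
      1/(n+2) * (1/(k+1) + 1/(((n-k:ℕ):ℝ)+1)) := by
    intro k hk
    rw [Finset.mem_range] at hk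
    obtain ⟨m, hm⟩ : ∃ m, n = k + m := ⟨n - k, by omega⟩
    subst hm
    have : k + m - k = m := by omega
    rw [this]
    have a0 : (0:ℝ) < (k:ℝ)+1 := by positivity
    have b0 : (0:ℝ) < (m:ℝ)+1 := by positivity
    have c0 : (0:ℝ) < ((k+m:ℕ):ℝ)+2 := by positivity
    field_simp
    push_cast; ring
  rw [Finset.sum_congr rfl key, ← Finset.mul_sum, Finset.sum_add_distrib, h2, h1]
  ring

/-- With `p = e⁻¹`, `q = 1 - e⁻¹`, `π̃₁ = ∑_{k≥0} q^k p/(1+k)` and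
`V₁ = ∑_{k≥1} (q^k p/(1+k)) ∑_{j=1}^k 1/j`, we have
`π̃₁ - V₁ = (p/2q)[-2 log(1-q) - (log(1-q))²] = p/(2q) = 1/(2(e-1)) > 0`;
equivalently `π̃₁ = 2 V₁`, and `-(p/q) log(1-q)` strictly exceeds `(p/2q)(log(1-q))²`. -/
theorem stmt_10 (p q : ℝ) (hp : p = Real.exp (-1)) (hq : q = 1 - p)
    (pi1 V1 : ℝ)
    (hpi1 : pi1 = ∑' k : ℕ, q ^ k * p / (1 + k))
    (hV1 : V1 = ∑' k : ℕ, q ^ (k + 1) * p / (1 + (k + 1)) *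
        ∑ j ∈ Finset.Icc 1 (k + 1), (1 : ℝ) / j) :
    pi1 - V1 = p / (2 * q) * (-2 * Real.log (1 - q) - Real.log (1 - q) ^ 2) ∧
    pi1 - V1 = p / (2 * q) ∧
    pi1 - V1 = 1 / (2 * (Real.exp 1 - 1)) ∧
    0 < pi1 - V1 ∧
    pi1 = 2 * V1 ∧
    p / (2 * q) * Real.log (1 - q) ^ 2 < -(p / q) * Real.log (1 - q) := by
  have hp0 : 0 < p := hp ▸ Real.exp_pos _
  have hp1 : p < 1 := by rw [hp, Real.exp_lt_one_iff]; norm_num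
  have hq0 : 0 < q := by rw [hq]; linarith
  have hq1 : q < 1 := by rw [hq]; linarith
  have habs : |q| < 1 := abs_lt.mpr ⟨by linarith, hq1⟩
  have h1q : 1 - q = p := by rw [hq]; ring
  have hlog : Real.log (1 - q) = -1 := by rw [h1q, hp, Real.log_exp]
  -- log series
  have hf : HasSum (fun n : ℕ => q ^ (n+1) / (n+1)) 1 := by
    have := Real.hasSum_pow_div_log_of_abs_lt_one habs
    rwa [hlog, neg_neg] at this
  set f : ℕ → ℝ := fun n => q ^ (n+1) / (n+1) with hfdef
  have hfnn : ∀ n, 0 ≤ f n := fun n => by positivity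
  have hfnorm : Summable fun n => ‖f n‖ := by
    simpa [Real.norm_eq_abs, abs_of_nonneg (hfnn _)] using hf.summable
  -- pi1 value
  have hpi1v : pi1 = p / q := by
    have h := hf.mul_left (p / q)
    have h2 : HasSum (fun k : ℕ => q ^ k * p / (1 + k)) (p / q) := by
      have : (fun k : ℕ => q ^ k * p / (1 + k)) = fun k : ℕ => p / q * f k := by
        funext n
        simp only [hfdef]
        rw [pow_succ]
        field_simp
        ring
      rw [this]; simpa using h
    rw [hpi1, h2.tsum_eq]
  -- Cauchy product
  have hc : HasSum (fun n => ∑ k ∈ range (n + 1), f k * f (n - k)) 1 := by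
    have := hasSum_sum_range_mul_of_summable_norm hfnorm hfnorm
    rwa [hf.tsum_eq, one_mul] at this
  have hterm : ∀ n : ℕ, p / (2 * q) * ∑ k ∈ range (n + 1), f k * f (n - k) =
      q ^ (n + 1) * p / (1 + ((n:ℝ) + 1)) * ∑ j ∈ Finset.Icc 1 (n + 1), (1:ℝ) / j := by
    intro n
    have hstep : ∀ k ∈ range (n+1), f k * f (n-k) =
        q ^ (n+2) * ((1:ℝ) / ((k+1) * (((n-k:ℕ):ℝ)+1))) := by
      intro k hk
      rw [Finset.mem_range] at hk
      have hpow : q ^ (k+1) * q ^ (n-k+1) = q ^ (n+2) := by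
        rw [← pow_add]; congr 1; omega
      simp only [hfdef]
      rw [div_mul_div_comm, hpow, mul_one_div]
    rw [Finset.sum_congr rfl hstep, ← Finset.mul_sum, harm_id n]
    have hn2 : ((n:ℝ)+2) ≠ 0 := by positivity
    rw [pow_succ, pow_succ]
    field_simp
    ring
  have hV1v : V1 = p / (2 * q) := by
    have h := hc.mul_left (p / (2 * q))
    rw [mul_one] at h
    have hfe : (fun n : ℕ => p / (2 * q) * ∑ k ∈ range (n + 1), f k * f (n - k))
        = (fun k : ℕ => q ^ (k + 1) * p / (1 + ((k:ℝ) + 1)) *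
            ∑ j ∈ Finset.Icc 1 (k + 1), (1:ℝ) / j) := funext hterm
    rw [hfe] at h
    rw [hV1, h.tsum_eq]
  have hpq : p / (2 * q) = 1 / (2 * (Real.exp 1 - 1)) := by
    rw [hp, hq, hp, Real.exp_neg]
    have he : (0:ℝ) < Real.exp 1 := Real.exp_pos 1
    have he1 : 1 < Real.exp 1 := by
      have := Real.add_one_lt_exp (by norm_num : (1:ℝ) ≠ 0); linarith
    field_simp
  have hd : pi1 - V1 = p / (2 * q) := by
    rw [hpi1v, hV1v]
    rw [div_sub_div _ _ hq0.ne' (by positivity : (2*q) ≠ (0:ℝ)), div_eq_div_iff (by positivity) (by positivity)]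
    ring
  refine ⟨?_, hd, ?_, ?_, ?_, ?_⟩
  · rw [hd, hlog]; ring
  · rw [hd, hpq]
  · rw [hd]; positivity
  · rw [hpi1v, hV1v, mul_div_assoc']
    rw [div_eq_div_iff hq0.ne' (by positivity : (2*q) ≠ (0:ℝ))]
    ring
  · rw [hlog]
    have : p / (2*q) < p / q := by
      rw [div_lt_div_iff₀ (by positivity) (by positivity)]
      nlinarith
    calc p / (2*q) * (-1:ℝ)^2 = p/(2*q) := by ring
      _ < p/q := this
      _ = -(p/q) * (-1) := by ring
end

section
/- Let $n\ge 1$ and $y\ge 1$ be integers, and consider a uniformly random permutation of $n+y$ distinctly ranked items, arranged in arrival order. Conditionally on the event that the best item is among the last $y$ positions, the probability that the first item among the last $y$ positions which is better than all of the first $n$ items is the best item overall equals $\frac{1}{y}\sum_{j=1}^{y}\frac{n}{n+j-1}$. -/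
open Finset

namespace Stmt11

variable {N : ℕ}

def Fset (b p : Fin N) : Finset (Equiv.Perm (Fin N)) :=
  univ.filter fun σ => σ.symm b = p

def Dset (b p m : Fin N) : Finset (Equiv.Perm (Fin N)) :=
  univ.filter fun σ => σ.symm b = p ∧ ∀ q : Fin N, (q : ℕ) < (p : ℕ) → σ m ≤ σ q

lemma mem_Fset {b p : Fin N} {σ : Equiv.Perm (Fin N)} :
    σ ∈ Fset b p ↔ σ.symm b = p := by simp [Fset]

lemma mem_Dset {b p m : Fin N} {σ : Equiv.Perm (Fin N)} :
    σ ∈ Dset b p m ↔ σ.symm b = p ∧ ∀ q : Fin N, (q : ℕ) < (p : ℕ) → σ m ≤ σ q := by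
  simp [Dset]

lemma Fset_card_eq (b p p' : Fin N) : (Fset b p).card = (Fset b p').card := by
  refine Finset.card_bij' (fun σ _ => σ * Equiv.swap p p') (fun σ _ => σ * Equiv.swap p p')
    ?_ ?_ ?_ ?_
  · intro σ hσ
    rw [mem_Fset] at *
    show (Equiv.swap p p').symm (σ.symm b) = p'
    rw [hσ]; simp
  · intro σ hσ
    rw [mem_Fset] at *
    show (Equiv.swap p p').symm (σ.symm b) = p
    rw [hσ]; simp
  · intro σ _
    show σ * Equiv.swap p p' * Equiv.swap p p' = σ
    rw [mul_assoc, Equiv.swap_mul_self, mul_one]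
  · intro σ _
    show σ * Equiv.swap p p' * Equiv.swap p p' = σ
    rw [mul_assoc, Equiv.swap_mul_self, mul_one]

lemma Fset_nonempty (b p : Fin N) : (Fset b p).Nonempty :=
  ⟨Equiv.swap b p, by simp [Fset]⟩

lemma mem_Dset_swap (b p : Fin N) {m m' : Fin N} (hm : (m:ℕ) < p) (hm' : (m':ℕ) < p)
    {σ : Equiv.Perm (Fin N)} (hσ : σ ∈ Dset b p m) : σ * Equiv.swap m m' ∈ Dset b p m' := by
  rw [mem_Dset] at *
  obtain ⟨h1, h2⟩ := hσ
  have hpm : p ≠ m := fun h => absurd hm (by rw [h]; exact lt_irrefl _)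
  have hpm' : p ≠ m' := fun h => absurd hm' (by rw [h]; exact lt_irrefl _)
  constructor
  · show (Equiv.swap m m').symm (σ.symm b) = p
    rw [h1, Equiv.symm_swap, Equiv.swap_apply_of_ne_of_ne hpm hpm']
  · intro q hq
    show σ (Equiv.swap m m' m') ≤ σ (Equiv.swap m m' q)
    rw [Equiv.swap_apply_right]
    apply h2
    by_cases hq1 : q = m
    · rw [hq1, Equiv.swap_apply_left]; exact hm'
    · by_cases hq2 : q = m'
      · rw [hq2, Equiv.swap_apply_right]; exact hm
      · rw [Equiv.swap_apply_of_ne_of_ne hq1 hq2]; exact hq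

lemma Dset_card_eq (b p : Fin N) {m m' : Fin N} (hm : (m:ℕ) < p) (hm' : (m':ℕ) < p) :
    (Dset b p m).card = (Dset b p m').card := by
  refine Finset.card_bij' (fun σ _ => σ * Equiv.swap m m') (fun σ _ => σ * Equiv.swap m m')
    (fun σ hσ => mem_Dset_swap b p hm hm' hσ)
    (fun σ hσ => by rw [Equiv.swap_comm]; exact mem_Dset_swap b p hm' hm hσ)
    ?_ ?_
  · intro σ _
    show σ * Equiv.swap m m' * Equiv.swap m m' = σ
    rw [mul_assoc, Equiv.swap_mul_self, mul_one]
  · intro σ _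
    show σ * Equiv.swap m m' * Equiv.swap m m' = σ
    rw [mul_assoc, Equiv.swap_mul_self, mul_one]

lemma Dset_disjoint (b p : Fin N) {m m' : Fin N} (hm : (m:ℕ) < p) (hm' : (m':ℕ) < p)
    (h : m ≠ m') : Disjoint (Dset b p m) (Dset b p m') := by
  rw [Finset.disjoint_left]
  intro σ h1 h2
  rw [mem_Dset] at h1 h2
  exact h (σ.injective (le_antisymm (h1.2 m' hm') (h2.2 m hm)))

lemma card_filter_lt (k : ℕ) (hk : k < N) :
    (univ.filter fun m : Fin N => (m:ℕ) < k).card = k := by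
  have : (univ.filter fun m : Fin N => (m:ℕ) < k) = Finset.Iio ⟨k, hk⟩ := by
    ext m; simp [Fin.lt_def]
  rw [this]; simp

lemma Fset_card_mul (b p : Fin N) (hp : 0 < (p:ℕ)) :
    (Fset b p).card = (p : ℕ) * (Dset b p ⟨0, p.pos⟩).card := by
  have hbu : Fset b p
      = (univ.filter fun m : Fin N => (m:ℕ) < p).biUnion (fun m => Dset b p m) := by
    ext σ
    simp only [mem_Fset, mem_Dset, mem_biUnion, mem_filter, mem_univ, true_and]
    constructor
    · intro h
      obtain ⟨m, hm, hmin⟩ := Finset.exists_min_image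
        (univ.filter fun q : Fin N => (q:ℕ) < (p:ℕ)) σ
        ⟨⟨0, p.pos⟩, by simp only [mem_filter, mem_univ, true_and]; exact hp⟩
      simp only [mem_filter, mem_univ, true_and] at hm
      exact ⟨m, hm, h, fun q hq =>
        hmin q (by simp only [mem_filter, mem_univ, true_and]; exact hq)⟩
    · rintro ⟨m, _, h, _⟩; exact h
  rw [hbu, Finset.card_biUnion]
  · rw [Finset.sum_congr rfl (fun m hm => Dset_card_eq b p (m' := ⟨0, p.pos⟩)
      (by simpa using (mem_filter.1 hm).2) hp)]
    rw [Finset.sum_const, smul_eq_mul, card_filter_lt _ p.isLt]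
  · intro m hm m' hm' hne
    exact Dset_disjoint b p (by simpa using (mem_filter.1 hm).2)
      (by simpa using (mem_filter.1 hm').2) hne

lemma Cset_card (b p : Fin N) (n : ℕ) (hn1 : 0 < n) (hnp : n ≤ (p:ℕ)) (hnN : n < N) :
    (univ.filter fun σ : Equiv.Perm (Fin N) => σ.symm b = p ∧
      ∃ m : Fin N, (m:ℕ) < n ∧ ∀ q : Fin N, (q:ℕ) < (p:ℕ) → σ m ≤ σ q).card
    = n * (Dset b p ⟨0, p.pos⟩).card := by
  have hbu : (univ.filter fun σ : Equiv.Perm (Fin N) => σ.symm b = p ∧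
      ∃ m : Fin N, (m:ℕ) < n ∧ ∀ q : Fin N, (q:ℕ) < (p:ℕ) → σ m ≤ σ q)
      = (univ.filter fun m : Fin N => (m:ℕ) < n).biUnion (fun m => Dset b p m) := by
    ext σ
    simp only [mem_Dset, mem_biUnion, mem_filter, mem_univ, true_and]
    constructor
    · rintro ⟨h1, m, hm, h2⟩
      exact ⟨m, hm, h1, h2⟩
    · rintro ⟨m, hm, h1, h2⟩
      exact ⟨h1, m, hm, h2⟩
  rw [hbu, Finset.card_biUnion]
  · rw [Finset.sum_congr rfl (fun m hm => Dset_card_eq b p (m' := ⟨0, p.pos⟩)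
      (lt_of_lt_of_le (by simpa using (mem_filter.1 hm).2) hnp)
      (lt_of_lt_of_le hn1 hnp))]
    rw [Finset.sum_const, smul_eq_mul, card_filter_lt _ hnN]
  · intro m hm m' hm' hne
    exact Dset_disjoint b p
      (lt_of_lt_of_le (by simpa using (mem_filter.1 hm).2) hnp)
      (lt_of_lt_of_le (by simpa using (mem_filter.1 hm').2) hnp) hne

end Stmt11

namespace Stmt11

lemma pred_iff (n y : ℕ) (hn : 1 ≤ n) (σ : Equiv.Perm (Fin (n + y)))
    (b : Fin (n + y)) (hb : (b : ℕ) = 0) :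
    ((∃ i : Fin (n + y),
        ((n ≤ (i : ℕ) ∧ ∀ j : Fin (n + y), (j : ℕ) < n → σ i < σ j) ∧
          (∀ i' : Fin (n + y),
            (n ≤ (i' : ℕ) ∧ ∀ j : Fin (n + y), (j : ℕ) < n → σ i' < σ j) → i ≤ i') ∧
          σ i = b)) ∧ n ≤ ((σ.symm b : Fin (n + y)) : ℕ))
    ↔ (n ≤ ((σ.symm b : Fin (n + y)) : ℕ) ∧
        ∃ m : Fin (n + y), (m : ℕ) < n ∧
          ∀ q : Fin (n + y), (q : ℕ) < ((σ.symm b : Fin (n + y)) : ℕ) → σ m ≤ σ q) := by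
  constructor
  · rintro ⟨⟨i, ⟨hin, _hcand⟩, hmin, hσi⟩, hB⟩
    refine ⟨hB, ?_⟩
    have hi : σ.symm b = i := by rw [← hσi, Equiv.symm_apply_apply]
    obtain ⟨m, hm, hmmin⟩ := Finset.exists_min_image
      (univ.filter fun q : Fin (n + y) => (q : ℕ) < ((σ.symm b : Fin (n + y)) : ℕ)) σ
      ⟨⟨0, by omega⟩, by simp only [mem_filter, mem_univ, true_and]; omega⟩
    simp only [mem_filter, mem_univ, true_and] at hm
    by_cases hmn : (m : ℕ) < n
    · exact ⟨m, hmn, fun q hq =>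
        hmmin q (by simp only [mem_filter, mem_univ, true_and]; exact hq)⟩
    · exfalso
      push_neg at hmn
      have hcandm : ∀ j : Fin (n + y), (j : ℕ) < n → σ m < σ j := by
        intro j hj
        have hle : σ m ≤ σ j :=
          hmmin j (by simp only [mem_filter, mem_univ, true_and]; omega)
        have hne : σ m ≠ σ j := by
          intro h
          have := σ.injective h
          rw [this] at hmn; omega
        exact lt_of_le_of_ne hle hne
      have h2 := hmin m ⟨hmn, hcandm⟩
      rw [hi] at hm
      rw [Fin.le_def] at h2
      omega
  · rintro ⟨hB, m, hmn, hmmin⟩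
    refine ⟨⟨σ.symm b, ⟨hB, ?_⟩, ?_, σ.apply_symm_apply b⟩, hB⟩
    · intro j hj
      have hne : σ (σ.symm b) ≠ σ j := by
        intro h
        have h2 := σ.injective h
        rw [← h2] at hj; omega
      rw [σ.apply_symm_apply] at hne ⊢
      rw [Fin.lt_def, hb]
      rcases Nat.eq_zero_or_pos (σ j : ℕ) with h0 | h0
      · exact absurd (Fin.ext (by rw [hb, h0])) hne
      · exact h0
    · rintro i' ⟨_hi'n, hcand'⟩
      by_contra hlt
      push_neg at hlt
      have h1 : σ m ≤ σ i' := hmmin i' (Fin.lt_def.1 hlt)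
      have h2 : σ i' < σ m := hcand' m hmn
      exact absurd h1 (not_le.2 h2)

end Stmt11

open Stmt11 in
/-- Uniform random permutation of `n+y` distinctly ranked items (position `i` carries rank
`σ i`, rank `0` being best). Conditionally on the best item being among the last `y`
positions, the probability that the first candidate among the last `y` positions (an item
better than all of the first `n` items) is the best overall equals
`(1/y) ∑_{j=1}^y n/(n+j-1)`. -/
theorem stmt_11 (n y : ℕ) (hn : 1 ≤ n) (hy : 1 ≤ y) :
    (Nat.card {σ : Equiv.Perm (Fin (n + y)) //
        (∃ i : Fin (n + y),
          ((n ≤ (i : ℕ) ∧ ∀ j : Fin (n + y), (j : ℕ) < n → σ i < σ j) ∧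
            (∀ i' : Fin (n + y),
              (n ≤ (i' : ℕ) ∧ ∀ j : Fin (n + y), (j : ℕ) < n → σ i' < σ j) → i ≤ i') ∧
            σ i = ⟨0, by omega⟩)) ∧
        n ≤ ((σ.symm ⟨0, by omega⟩ : Fin (n + y)) : ℕ)} : ℝ) /
      (Nat.card {σ : Equiv.Perm (Fin (n + y)) //
        n ≤ ((σ.symm ⟨0, by omega⟩ : Fin (n + y)) : ℕ)} : ℝ)
    = (1 / (y : ℝ)) * ∑ j ∈ Finset.Icc 1 y, (n : ℝ) / ((n : ℝ) + (j : ℝ) - 1) := by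
  have hb0 : 0 < n + y := by omega
  set b : Fin (n + y) := ⟨0, hb0⟩ with hbdef
  have hbv : (b : ℕ) = 0 := rfl
  -- the index set of last-`y` positions
  set P : Finset (Fin (n + y)) := univ.filter fun p : Fin (n + y) => n ≤ (p : ℕ) with hPdef
  have hPmem : ∀ p : Fin (n + y), p ∈ P ↔ n ≤ (p : ℕ) := by
    intro p; simp [hPdef]
  have hPcard : P.card = y := by
    have : P = Finset.Ici (⟨n, by omega⟩ : Fin (n + y)) := by
      ext p; simp [hPdef, Fin.le_def]
    rw [this]; simp
  -- numerator card
  have hnum : Nat.card {σ : Equiv.Perm (Fin (n + y)) //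
      (∃ i : Fin (n + y),
        ((n ≤ (i : ℕ) ∧ ∀ j : Fin (n + y), (j : ℕ) < n → σ i < σ j) ∧
          (∀ i' : Fin (n + y),
            (n ≤ (i' : ℕ) ∧ ∀ j : Fin (n + y), (j : ℕ) < n → σ i' < σ j) → i ≤ i') ∧
          σ i = b)) ∧
      n ≤ ((σ.symm b : Fin (n + y)) : ℕ)}
      = ∑ p ∈ P, n * (Dset b p ⟨0, p.pos⟩).card := by
    rw [Nat.card_eq_fintype_card, Fintype.card_subtype]
    have hre : (univ.filter fun σ : Equiv.Perm (Fin (n + y)) =>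
        (∃ i : Fin (n + y),
          ((n ≤ (i : ℕ) ∧ ∀ j : Fin (n + y), (j : ℕ) < n → σ i < σ j) ∧
            (∀ i' : Fin (n + y),
              (n ≤ (i' : ℕ) ∧ ∀ j : Fin (n + y), (j : ℕ) < n → σ i' < σ j) → i ≤ i') ∧
            σ i = b)) ∧
        n ≤ ((σ.symm b : Fin (n + y)) : ℕ))
        = P.biUnion (fun p => univ.filter fun σ : Equiv.Perm (Fin (n + y)) =>
            σ.symm b = p ∧ ∃ m : Fin (n + y), (m : ℕ) < n ∧
              ∀ q : Fin (n + y), (q : ℕ) < (p : ℕ) → σ m ≤ σ q) := by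
      ext σ
      simp only [mem_filter, mem_univ, true_and, mem_biUnion]
      rw [pred_iff n y hn σ b hbv]
      constructor
      · rintro ⟨hB, m, hm, hmin⟩
        exact ⟨σ.symm b, (hPmem _).2 hB, rfl, m, hm, hmin⟩
      · rintro ⟨p, hp, hσp, m, hm, hmin⟩
        subst hσp
        exact ⟨(hPmem _).1 hp, m, hm, hmin⟩
    rw [hre, Finset.card_biUnion]
    · exact Finset.sum_congr rfl fun p hp =>
        Cset_card b p n hn ((hPmem p).1 hp) (by omega)
    · intro p hp p' hp' hne
      simp only [Function.onFun]
      rw [Finset.disjoint_left]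
      intro σ h1 h2
      rw [mem_filter] at h1 h2
      exact hne (h1.2.1 ▸ h2.2.1)
  -- denominator card
  have hden : Nat.card {σ : Equiv.Perm (Fin (n + y)) //
      n ≤ ((σ.symm b : Fin (n + y)) : ℕ)} = y * (Fset b b).card := by
    rw [Nat.card_eq_fintype_card, Fintype.card_subtype]
    have hre : (univ.filter fun σ : Equiv.Perm (Fin (n + y)) =>
        n ≤ ((σ.symm b : Fin (n + y)) : ℕ)) = P.biUnion (fun p => Fset b p) := by
      ext σ
      simp only [mem_filter, mem_univ, true_and, mem_biUnion, mem_Fset]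
      constructor
      · intro h
        exact ⟨σ.symm b, (hPmem _).2 h, rfl⟩
      · rintro ⟨p, hp, rfl⟩
        exact (hPmem _).1 hp
    rw [hre, Finset.card_biUnion]
    · rw [Finset.sum_congr rfl (fun p _ => Fset_card_eq b p b), Finset.sum_const,
        smul_eq_mul, hPcard]
    · intro p hp p' hp' hne
      simp only [Function.onFun]
      rw [Finset.disjoint_left]
      intro σ h1 h2
      rw [mem_Fset] at h1 h2
      exact hne (h1 ▸ h2)
  rw [hnum, hden]
  -- real arithmetic
  have hc1pos : 0 < (Fset b b).card := Finset.card_pos.2 (Fset_nonempty b b)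
  set c1 : ℕ := (Fset b b).card with hc1def
  have hrel : ∀ p ∈ P, (p : ℕ) * (Dset b p ⟨0, p.pos⟩).card = c1 := by
    intro p hp
    have hp0 : 0 < (p : ℕ) := lt_of_lt_of_le hn ((hPmem p).1 hp)
    rw [← Fset_card_mul b p hp0, hc1def, Fset_card_eq b p b]
  have hsum : (↑(∑ p ∈ P, n * (Dset b p ⟨0, p.pos⟩).card) : ℝ)
      = (c1 : ℝ) * ∑ p ∈ P, (n : ℝ) / (p : ℕ) := by
    push_cast
    rw [Finset.mul_sum]
    refine Finset.sum_congr rfl fun p hp => ?_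
    have hp0 : 0 < (p : ℕ) := lt_of_lt_of_le hn ((hPmem p).1 hp)
    have h := hrel p hp
    have hc : ((p : ℕ) : ℝ) * ((Dset b p ⟨0, p.pos⟩).card : ℝ) = (c1 : ℝ) := by
      exact_mod_cast congrArg (Nat.cast : ℕ → ℝ) h
    have hpne : ((p : ℕ) : ℝ) ≠ 0 := by positivity
    rw [← hc]
    field_simp
  rw [hsum]
  have hST : ∑ p ∈ P, (n : ℝ) / (p : ℕ)
      = ∑ j ∈ Finset.Icc 1 y, (n : ℝ) / ((n : ℝ) + (j : ℝ) - 1) := by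
    refine Finset.sum_bij' (i := fun (p : Fin (n + y)) _ => (p : ℕ) + 1 - n)
      (j := fun (a : ℕ) (ha : a ∈ Finset.Icc 1 y) =>
        (⟨n + a - 1, by rw [Finset.mem_Icc] at ha; omega⟩ : Fin (n + y)))
      ?_ ?_ ?_ ?_ ?_
    · intro p hp
      have h1 := (hPmem p).1 hp
      have h2 : (p : ℕ) < n + y := p.isLt
      simp only [Finset.mem_Icc]
      omega
    · intro a ha
      rw [Finset.mem_Icc] at ha
      rw [hPmem]; simp; omega
    · intro p hp
      have := (hPmem p).1 hp
      apply Fin.ext; simp; omega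
    · intro a ha
      rw [Finset.mem_Icc] at ha
      simp; omega
    · intro p hp
      have hnp := (hPmem p).1 hp
      congr 1
      have : (((p : ℕ) + 1 - n : ℕ) : ℝ) = ((p : ℕ) : ℝ) + 1 - (n : ℝ) := by
        push_cast [Nat.cast_sub (by omega : n ≤ (p : ℕ) + 1)]; ring
      rw [this]; ring
  rw [hST]
  have hyne : ((y : ℕ) : ℝ) ≠ 0 := by positivity
  have hc1ne : ((c1 : ℕ) : ℝ) ≠ 0 := by positivity
  push_cast
  field_simp
end

section
/- For every integer $n\ge 1$, every $p\in(0,1)$ with $q=1-p$, the win probability of the fixed threshold rule given $n$ arrivals before the threshold, $V_n := \sum_{y\ge 1} \binom{n+y-1}{y} q^{y} p^{n}\,\frac{n}{n+y}\sum_{j=1}^{y}\frac{1}{n+j-1}$, defines a convergent series, and in the case $n=1$ it equals $\frac{p}{2q}(\log(1-q))^2$ while $\tilde\pi_1 := \sum_{k\ge 0}\frac{q^{k}p}{1+k} = -\frac{p}{q}\log(1-q)$ satisfies $\tilde\pi_1 - V_1 = \frac{p}{2q}\bigl[-2\log(1-q) - (\log(1-q))^{2}\bigr]$, which is strictly positive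 for all $q \in (0, 1-e^{-2})$. -/
open Finset Real

lemma aux_Icc_range (m : ℕ) (g : ℕ → ℝ) :
    ∑ j ∈ Finset.Icc 1 (m + 1), g j = ∑ k ∈ Finset.range (m + 1), g (k + 1) := by
  rw [← Finset.Ico_add_one_right_eq_Icc, Finset.sum_Ico_eq_sum_range]
  simp [add_comm]

lemma aux_cauchy (m : ℕ) :
    ∑ k ∈ Finset.range (m + 1), (1 : ℝ) / ((k : ℝ) + 1) * (1 / (((m - k : ℕ) : ℝ) + 1))
      = 2 / ((m : ℝ) + 2) * ∑ j ∈ Finset.Icc 1 (m + 1), (1 : ℝ) / (j : ℝ) := by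
  have hrefl : ∑ k ∈ Finset.range (m + 1), (1 : ℝ) / (((m - k : ℕ) : ℝ) + 1)
      = ∑ k ∈ Finset.range (m + 1), (1 : ℝ) / ((k : ℝ) + 1) := by
    have := Finset.sum_range_reflect (fun k => (1 : ℝ) / ((k : ℝ) + 1)) (m + 1)
    simpa using this
  have hterm : ∀ k ∈ Finset.range (m + 1),
      (1 : ℝ) / ((k : ℝ) + 1) * (1 / (((m - k : ℕ) : ℝ) + 1))
        = 1 / ((m : ℝ) + 2) * ((1 : ℝ) / ((k : ℝ) + 1) + 1 / (((m - k : ℕ) : ℝ) + 1)) := by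
    intro k hk
    have hk' : k ≤ m := Nat.lt_succ_iff.mp (Finset.mem_range.mp hk)
    rw [Nat.cast_sub hk']
    have h1 : ((k : ℝ) + 1) ≠ 0 := by positivity
    have h2 : ((m : ℝ) - k + 1) ≠ 0 := by
      have : (k : ℝ) ≤ m := by exact_mod_cast hk'
      nlinarith
    have h3 : ((m : ℝ) + 2) ≠ 0 := by positivity
    field_simp
    ring
  rw [Finset.sum_congr rfl hterm, ← Finset.mul_sum, Finset.sum_add_distrib, hrefl,
    aux_Icc_range m (fun j => (1 : ℝ) / (j : ℝ))]
  push_cast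
  ring

lemma aux_log (q : ℝ) (hq0 : 0 < q) (hq1 : q < 1) :
    HasSum (fun k : ℕ => q ^ (k + 1) / ((k : ℝ) + 1)) (-Real.log (1 - q)) :=
  hasSum_pow_div_log_of_abs_lt_one (by rw [abs_of_pos hq0]; exact hq1)

lemma aux_core (q : ℝ) (hq0 : 0 < q) (hq1 : q < 1) (p : ℝ) :
    HasSum (fun y : ℕ => q ^ y * p / (1 + (y : ℝ)) * ∑ j ∈ Finset.Icc 1 y, (1 : ℝ) / (j : ℝ))
      (p / (2 * q) * Real.log (1 - q) ^ 2) := by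
  have hqne : q ≠ 0 := ne_of_gt hq0
  set f : ℕ → ℝ := fun k => q ^ (k + 1) / ((k : ℝ) + 1) with hf
  have hL := aux_log q hq0 hq1
  have hfn : Summable fun k => ‖f k‖ := by
    refine hL.summable.congr fun k => ?_
    rw [Real.norm_eq_abs, abs_of_nonneg (by positivity)]
  have hC : HasSum (fun m : ℕ => ∑ k ∈ Finset.range (m + 1), f k * f (m - k))
      (Real.log (1 - q) ^ 2) := by
    have h := hasSum_sum_range_mul_of_summable_norm hfn hfn
    rw [hL.tsum_eq] at h
    convert h using 2
    · exact rfl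
    ring
  have heq : (fun m : ℕ => ∑ k ∈ Finset.range (m + 1), f k * f (m - k))
      = fun m : ℕ =>
        q ^ (m + 2) * (2 / ((m : ℝ) + 2) * ∑ j ∈ Finset.Icc 1 (m + 1), (1 : ℝ) / (j : ℝ)) := by
    funext m
    have hstep : ∀ k ∈ Finset.range (m + 1),
        f k * f (m - k)
          = q ^ (m + 2) * ((1 : ℝ) / ((k : ℝ) + 1) * (1 / (((m - k : ℕ) : ℝ) + 1))) := by
      intro k hk
      have hk' : k ≤ m := Nat.lt_succ_iff.mp (Finset.mem_range.mp hk)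
      have hpow : q ^ (k + 1) * q ^ ((m - k) + 1) = q ^ (m + 2) := by
        rw [← pow_add]
        congr 1
        omega
      simp only [hf]
      rw [div_mul_div_comm, hpow, div_eq_mul_inv, mul_inv, one_div, one_div]
    rw [Finset.sum_congr rfl hstep, ← Finset.mul_sum, aux_cauchy m]
  rw [heq] at hC
  have hshift : HasSum
      (fun m : ℕ => q ^ (m + 1) * p / (1 + ((m + 1 : ℕ) : ℝ)) *
        ∑ j ∈ Finset.Icc 1 (m + 1), (1 : ℝ) / (j : ℝ))
      (p / (2 * q) * Real.log (1 - q) ^ 2) := by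
    have h := hC.mul_left (p / (2 * q))
    convert h using 1
    · exact rfl
    funext m
    push_cast
    field_simp
    ring
  have hfinal := (hasSum_nat_add_iff
      (f := fun y : ℕ => q ^ y * p / (1 + (y : ℝ)) * ∑ j ∈ Finset.Icc 1 y, (1 : ℝ) / (j : ℝ))
      1).mp hshift
  simpa using hfinal

lemma aux_pi (q : ℝ) (hq0 : 0 < q) (hq1 : q < 1) (p : ℝ) :
    HasSum (fun k : ℕ => q ^ k * p / (1 + (k : ℝ))) (-(p / q) * Real.log (1 - q)) := by
  have hqne : q ≠ 0 := ne_of_gt hq0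
  have h := (aux_log q hq0 hq1).mul_left (p / q)
  convert h using 1
  · exact rfl
  · funext k
    rw [pow_succ']
    field_simp
    ring
  · ring

lemma aux_summable (n : ℕ) (hn : 1 ≤ n) (p : ℝ) (hp : p ∈ Set.Ioo (0 : ℝ) 1)
    (q : ℝ) (hq0 : 0 < q) (hq1 : q < 1) :
    Summable (fun y : ℕ => ((n + y - 1).choose y : ℝ) * q ^ y * p ^ n *
        ((n : ℝ) / ((n : ℝ) + (y : ℝ))) *
        ∑ j ∈ Finset.Icc 1 y, (1 : ℝ) / ((n : ℝ) + (j : ℝ) - 1)) := by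
  have hn1 : (1 : ℝ) ≤ (n : ℝ) := by exact_mod_cast hn
  -- summable majorant
  have hmaj : Summable (fun y : ℕ => ((n : ℝ) + 1) ^ n * (((y : ℝ) + 1) ^ n * q ^ y)) := by
    apply Summable.mul_left
    have hg : Summable (fun m : ℕ => (m : ℝ) ^ n * q ^ m) :=
      summable_pow_mul_geometric_of_norm_lt_one n (by rw [Real.norm_eq_abs, abs_of_pos hq0]; exact hq1)
    have hg1 : Summable ((fun m : ℕ => (m : ℝ) ^ n * q ^ m) ∘ (fun y => y + 1)) :=
      hg.comp_injective (add_left_injective 1)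
    have := hg1.mul_left q⁻¹
    refine this.congr fun y => ?_
    simp only [Function.comp]
    push_cast
    rw [pow_succ]
    field_simp
  refine Summable.of_nonneg_of_le (fun y => ?_) (fun y => ?_) hmaj
  · have hS : (0 : ℝ) ≤ ∑ j ∈ Finset.Icc 1 y, (1 : ℝ) / ((n : ℝ) + (j : ℝ) - 1) := by
      refine Finset.sum_nonneg fun j hj => ?_
      have hj1 : 1 ≤ j := (Finset.mem_Icc.mp hj).1
      have hj2 : (1 : ℝ) ≤ (j : ℝ) := by exact_mod_cast hj1
      apply div_nonneg zero_le_one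
      linarith
    have h1 : (0 : ℝ) ≤ ((n + y - 1).choose y : ℝ) * q ^ y * p ^ n *
        ((n : ℝ) / ((n : ℝ) + (y : ℝ))) :=
      mul_nonneg (mul_nonneg (mul_nonneg (Nat.cast_nonneg _) (by positivity))
        (pow_nonneg hp.1.le n)) (div_nonneg (Nat.cast_nonneg n) (by positivity))
    exact mul_nonneg h1 hS
  · -- bound each factor
    have hSle : ∑ j ∈ Finset.Icc 1 y, (1 : ℝ) / ((n : ℝ) + (j : ℝ) - 1) ≤ (y : ℝ) := by
      calc ∑ j ∈ Finset.Icc 1 y, (1 : ℝ) / ((n : ℝ) + (j : ℝ) - 1)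
          ≤ ∑ j ∈ Finset.Icc 1 y, (1 : ℝ) := by
            refine Finset.sum_le_sum fun j hj => ?_
            have hj1 : (1 : ℝ) ≤ (j : ℝ) := by exact_mod_cast (Finset.mem_Icc.mp hj).1
            rw [div_le_one (by linarith)]
            linarith
        _ = (y : ℝ) := by simp
    have hchoose : ((n + y - 1).choose y : ℝ) ≤ ((n : ℝ) + y) ^ (n - 1) := by
      have hsymm : (n + y - 1).choose y = (n + y - 1).choose (n - 1) :=
        Nat.choose_symm_of_eq_add (by omega)
      calc ((n + y - 1).choose y : ℝ) = ((n + y - 1).choose (n - 1) : ℝ) := by rw [hsymm]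
        _ ≤ ((n + y - 1 : ℕ) : ℝ) ^ (n - 1) / (Nat.factorial (n - 1) : ℝ) :=
            Nat.choose_le_pow_div _ _
        _ ≤ ((n + y - 1 : ℕ) : ℝ) ^ (n - 1) := by
            apply div_le_self (by positivity)
            exact_mod_cast Nat.one_le_iff_ne_zero.mpr (Nat.factorial_ne_zero _)
        _ ≤ ((n : ℝ) + y) ^ (n - 1) := by
            apply pow_le_pow_left₀ (by positivity)
            have : ((n + y - 1 : ℕ) : ℝ) ≤ ((n + y : ℕ) : ℝ) := by
              exact_mod_cast Nat.sub_le _ _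
            push_cast at this ⊢
            linarith
    have hfrac : (n : ℝ) / ((n : ℝ) + (y : ℝ)) ≤ 1 := by
      rw [div_le_one (by positivity)]
      have : (0 : ℝ) ≤ (y : ℝ) := Nat.cast_nonneg y
      linarith
    have hpn : p ^ n ≤ 1 := pow_le_one₀ hp.1.le hp.2.le
    have key : ((n + y - 1).choose y : ℝ) * q ^ y * p ^ n *
        ((n : ℝ) / ((n : ℝ) + (y : ℝ))) *
        ∑ j ∈ Finset.Icc 1 y, (1 : ℝ) / ((n : ℝ) + (j : ℝ) - 1)
        ≤ ((n : ℝ) + y) ^ (n - 1) * q ^ y * 1 * 1 * (y : ℝ) := by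
      have hS : (0 : ℝ) ≤ ∑ j ∈ Finset.Icc 1 y, (1 : ℝ) / ((n : ℝ) + (j : ℝ) - 1) := by
        refine Finset.sum_nonneg fun j hj => ?_
        have hj2 : (1 : ℝ) ≤ (j : ℝ) := by exact_mod_cast (Finset.mem_Icc.mp hj).1
        apply div_nonneg zero_le_one
        linarith
      have h1 : ((n + y - 1).choose y : ℝ) * q ^ y ≤ ((n : ℝ) + y) ^ (n - 1) * q ^ y := by
        apply mul_le_mul_of_nonneg_right hchoose (by positivity)
      have h2 : ((n + y - 1).choose y : ℝ) * q ^ y * p ^ n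
          ≤ ((n : ℝ) + y) ^ (n - 1) * q ^ y * 1 :=
        mul_le_mul h1 hpn (pow_nonneg hp.1.le n) (by positivity)
      have h3 : ((n + y - 1).choose y : ℝ) * q ^ y * p ^ n * ((n : ℝ) / ((n : ℝ) + (y : ℝ)))
          ≤ ((n : ℝ) + y) ^ (n - 1) * q ^ y * 1 * 1 :=
        mul_le_mul h2 hfrac (by positivity) (by positivity)
      exact mul_le_mul h3 hSle hS (by positivity)
    refine key.trans ?_
    have hny : ((n : ℝ) + y) ^ (n - 1) * (y : ℝ) ≤ ((n : ℝ) + y) ^ n := by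
      calc ((n : ℝ) + y) ^ (n - 1) * (y : ℝ) ≤ ((n : ℝ) + y) ^ (n - 1) * ((n : ℝ) + y) := by
            apply mul_le_mul_of_nonneg_left (by linarith [Nat.cast_nonneg (α := ℝ) y]) (by positivity)
        _ = ((n : ℝ) + y) ^ n := by
            rw [← pow_succ]
            congr 1
            omega
    have hsplit : ((n : ℝ) + y) ^ n ≤ (((n : ℝ) + 1) * ((y : ℝ) + 1)) ^ n := by
      apply pow_le_pow_left₀ (by positivity)
      have h0n : (0 : ℝ) ≤ (n : ℝ) := Nat.cast_nonneg n
      have h0y : (0 : ℝ) ≤ (y : ℝ) := Nat.cast_nonneg y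
      nlinarith
    calc ((n : ℝ) + y) ^ (n - 1) * q ^ y * 1 * 1 * (y : ℝ)
        = ((n : ℝ) + y) ^ (n - 1) * (y : ℝ) * q ^ y := by ring
      _ ≤ ((n : ℝ) + y) ^ n * q ^ y := mul_le_mul_of_nonneg_right hny (by positivity)
      _ ≤ (((n : ℝ) + 1) * ((y : ℝ) + 1)) ^ n * q ^ y :=
          mul_le_mul_of_nonneg_right hsplit (by positivity)
      _ = ((n : ℝ) + 1) ^ n * (((y : ℝ) + 1) ^ n * q ^ y) := by rw [mul_pow]; ring

/-- For `n ≥ 1`, `p ∈ (0,1)`, `q = 1-p`: the series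
`V_n = ∑_{y≥1} C(n+y-1,y) q^y p^n (n/(n+y)) ∑_{j=1}^y 1/(n+j-1)` converges; for `n = 1`
it equals `(p/2q)(log(1-q))²`, while `π̃₁ = ∑_{k≥0} q^k p/(1+k) = -(p/q) log(1-q)` and
`π̃₁ - V₁ = (p/2q)[-2 log(1-q) - (log(1-q))²]`, which is strictly positive for all
`q ∈ (0, 1-e⁻²)`. -/
theorem stmt_13 (n : ℕ) (hn : 1 ≤ n) (p : ℝ) (hp : p ∈ Set.Ioo (0 : ℝ) 1)
    (q : ℝ) (hq : q = 1 - p) :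
    Summable (fun y : ℕ => ((n + y - 1).choose y : ℝ) * q ^ y * p ^ n *
        ((n : ℝ) / ((n : ℝ) + (y : ℝ))) *
        ∑ j ∈ Finset.Icc 1 y, (1 : ℝ) / ((n : ℝ) + (j : ℝ) - 1)) ∧
    (n = 1 →
      (∑' y : ℕ, ((n + y - 1).choose y : ℝ) * q ^ y * p ^ n *
          ((n : ℝ) / ((n : ℝ) + (y : ℝ))) *
          ∑ j ∈ Finset.Icc 1 y, (1 : ℝ) / ((n : ℝ) + (j : ℝ) - 1))
        = p / (2 * q) * Real.log (1 - q) ^ 2) ∧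
    (∑' k : ℕ, q ^ k * p / (1 + (k : ℝ))) = -(p / q) * Real.log (1 - q) ∧
    (∑' k : ℕ, q ^ k * p / (1 + (k : ℝ))) -
        (∑' y : ℕ, ((1 + y - 1).choose y : ℝ) * q ^ y * p ^ 1 *
          ((1 : ℝ) / (1 + (y : ℝ))) *
          ∑ j ∈ Finset.Icc 1 y, (1 : ℝ) / ((1 : ℝ) + (j : ℝ) - 1))
      = p / (2 * q) * (-2 * Real.log (1 - q) - Real.log (1 - q) ^ 2) ∧
    (q < 1 - Real.exp (-2) →
      0 < p / (2 * q) * (-2 * Real.log (1 - q) - Real.log (1 - q) ^ 2)) := by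
  obtain ⟨hp0, hp1⟩ := hp
  have hq0 : 0 < q := by rw [hq]; linarith
  have hq1 : q < 1 := by rw [hq]; linarith
  have hqne : q ≠ 0 := ne_of_gt hq0
  have hV1 : (∑' y : ℕ, ((1 + y - 1).choose y : ℝ) * q ^ y * p ^ 1 *
          ((1 : ℝ) / (1 + (y : ℝ))) *
          ∑ j ∈ Finset.Icc 1 y, (1 : ℝ) / ((1 : ℝ) + (j : ℝ) - 1))
        = p / (2 * q) * Real.log (1 - q) ^ 2 := by
    rw [← (aux_core q hq0 hq1 p).tsum_eq]
    apply tsum_congr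
    intro y
    have hch : (1 + y - 1).choose y = 1 := by
      rw [Nat.add_comm, Nat.add_sub_cancel, Nat.choose_self]
    have hsum : ∑ j ∈ Finset.Icc 1 y, (1 : ℝ) / ((1 : ℝ) + (j : ℝ) - 1)
        = ∑ j ∈ Finset.Icc 1 y, (1 : ℝ) / (j : ℝ) := by
      refine Finset.sum_congr rfl fun j _ => ?_
      congr 1
      ring
    rw [hch, hsum]
    push_cast
    ring
  have hPi : (∑' k : ℕ, q ^ k * p / (1 + (k : ℝ))) = -(p / q) * Real.log (1 - q) :=
    (aux_pi q hq0 hq1 p).tsum_eq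
  refine ⟨aux_summable n hn p ⟨hp0, hp1⟩ q hq0 hq1, ?_, hPi, ?_, ?_⟩
  · intro hn1
    subst hn1
    rw [← (aux_core q hq0 hq1 p).tsum_eq]
    apply tsum_congr
    intro y
    have hch : (1 + y - 1).choose y = 1 := by
      rw [Nat.add_comm, Nat.add_sub_cancel, Nat.choose_self]
    have hsum : ∑ j ∈ Finset.Icc 1 y, (1 : ℝ) / (((1 : ℕ) : ℝ) + (j : ℝ) - 1)
        = ∑ j ∈ Finset.Icc 1 y, (1 : ℝ) / (j : ℝ) := by
      refine Finset.sum_congr rfl fun j _ => ?_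
      congr 1
      push_cast
      ring
    rw [hch, hsum]
    push_cast
    ring
  · rw [hPi, hV1]
    field_simp
  · intro hqlt
    have hexp : Real.exp (-2) < 1 - q := by linarith
    have h1q0 : (0 : ℝ) < 1 - q := lt_trans (Real.exp_pos _) hexp
    have hLlt : Real.log (1 - q) < 0 := Real.log_neg h1q0 (by linarith)
    have hLgt : -2 < Real.log (1 - q) := by
      have := Real.log_lt_log (Real.exp_pos (-2)) hexp
      rwa [Real.log_exp] at this
    have hfac : (0 : ℝ) < p / (2 * q) := by positivity
    have : (0 : ℝ) < -2 * Real.log (1 - q) - Real.log (1 - q) ^ 2 := by nlinarith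
    exact mul_pos hfac this
end
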